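/- Let h : M₁ → M₂ be smooth, X₁, X₂ vector fields on M₁, M₂ with (local) flows Φᵗ_{X₁}, Φᵗ_{X₂}. Then the Trautman lift satisfies (𝓛_{(X₁,X₂)}h)(x) = d/dt|_{t=0} Φ^{−t}_{X₂}(h(Φᵗ_{X₁}(x))), i.e. the pointwise derivative at t = 0 of the curve t ↦ Φ^{−t}_{X₂} ∘ h ∘ Φᵗ_{X₁}(x) equals (T_x h)(X₁) − (X₂)_{h(x)}. -/

import Mathlib

open Manifold

/-- The Trautman lift in terms of flows: if `φ₁`, `φ₂` are the flows of the
vector fields `X₁` on `M₁` and `X₂` on `M₂` (each `t ↦ φᵢ t x` is an integral curve of `Xᵢ`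
with `φᵢ 0 = id`, and `φ₂` is smooth jointly in `(t, x)`), and `h : M₁ → M₂` is smooth, then
the derivative at `t = 0` of the curve `t ↦ φ₂^{-t} (h (φ₁^t x))` is
`(T_x h)(X₁) − (X₂)_{h(x)}`. -/
theorem stmt4
    {E₁ : Type*} [NormedAddCommGroup E₁] [NormedSpace ℝ E₁]
    {H₁ : Type*} [TopologicalSpace H₁] {I₁ : ModelWithCorners ℝ E₁ H₁}
    {M₁ : Type*} [TopologicalSpace M₁] [ChartedSpace H₁ M₁]
    {E₂ : Type*} [NormedAddCommGroup E₂] [NormedSpace ℝ E₂]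
    {H₂ : Type*} [TopologicalSpace H₂] {I₂ : ModelWithCorners ℝ E₂ H₂}
    {M₂ : Type*} [TopologicalSpace M₂] [ChartedSpace H₂ M₂]
    (h : M₁ → M₂) (hh : MDifferentiable I₁ I₂ h)
    (X₁ : (x : M₁) → TangentSpace I₁ x) (X₂ : (x : M₂) → TangentSpace I₂ x)
    (φ₁ : ℝ → M₁ → M₁) (φ₂ : ℝ → M₂ → M₂)
    (hφ₁0 : ∀ x, φ₁ 0 x = x) (hφ₂0 : ∀ x, φ₂ 0 x = x)
    (hφ₁ : ∀ x, IsMIntegralCurve (fun t => φ₁ t x) X₁)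
    (hφ₂ : ∀ x, IsMIntegralCurve (fun t => φ₂ t x) X₂)
    (hφ₂smooth : ContMDiff (𝓘(ℝ, ℝ).prod I₂) I₂ (⊤ : ℕ∞) (fun p : ℝ × M₂ => φ₂ p.1 p.2))
    (x : M₁) :
    HasMFDerivAt 𝓘(ℝ, ℝ) I₂ (fun t => φ₂ (-t) (h (φ₁ t x))) 0
      ((1 : ℝ →L[ℝ] ℝ).smulRight
        ((mfderiv I₁ I₂ h x (X₁ x) : E₂) - X₂ (h x))) := by
  -- the inner curve Ψ : ℝ → ℝ × M₂
  set G : ℝ × M₂ → M₂ := fun p => φ₂ p.1 p.2 with hG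
  -- derivative of t ↦ -t
  have hneg : HasMFDerivAt 𝓘(ℝ, ℝ) 𝓘(ℝ, ℝ) (fun t : ℝ => -t) 0
      (-(ContinuousLinearMap.id ℝ ℝ)) :=
    ((hasFDerivAt_id (0:ℝ)).neg).hasMFDerivAt
  -- derivative of t ↦ h (φ₁ t x)
  have hcurve : HasMFDerivAt 𝓘(ℝ, ℝ) I₂ (fun t => h (φ₁ t x)) 0
      ((mfderiv I₁ I₂ h x).comp ((1 : ℝ →L[ℝ] ℝ).smulRight (X₁ x))) := by
    have := ((hh (φ₁ 0 x)).hasMFDerivAt).comp 0 (hφ₁ x 0)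
    rw [hφ₁0 x] at this
    have e : (X₁ ((fun t => φ₁ t x) 0) : E₁) = X₁ x := congrArg (fun y : M₁ => (X₁ y : E₁)) (hφ₁0 x)
    rw [e] at this
    exact this
  -- Ψ and its derivative
  have hΨ : HasMFDerivAt 𝓘(ℝ, ℝ) (𝓘(ℝ, ℝ).prod I₂) (fun t => ((-t : ℝ), h (φ₁ t x))) 0
      ((-(ContinuousLinearMap.id ℝ ℝ)).prod
        ((mfderiv I₁ I₂ h x).comp ((1 : ℝ →L[ℝ] ℝ).smulRight (X₁ x)))) := by
    have hmd : MDifferentiableAt 𝓘(ℝ, ℝ) (𝓘(ℝ, ℝ).prod I₂)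
        (fun t => ((-t : ℝ), h (φ₁ t x))) 0 :=
      hneg.mdifferentiableAt.prodMk hcurve.mdifferentiableAt
    have := hmd.hasMFDerivAt
    rwa [hneg.mdifferentiableAt.mfderiv_prod hcurve.mdifferentiableAt, hneg.mfderiv, hcurve.mfderiv] at this
  -- point identification
  have hpt : ((fun t => ((-t : ℝ), h (φ₁ t x))) 0) = ((0 : ℝ), h x) := by
    simp [hφ₁0]
  -- G is differentiable
  have hGmd : ∀ p : ℝ × M₂, MDifferentiableAt (𝓘(ℝ, ℝ).prod I₂) I₂ G p := fun p =>
    (hφ₂smooth p).mdifferentiableAt (by simp)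
  have hF := (hGmd _).hasMFDerivAt.comp 0 hΨ
  have key : (mfderiv (𝓘(ℝ, ℝ).prod I₂) I₂ G ((fun t => ((-t : ℝ), h (φ₁ t x))) 0)).comp
      ((-(ContinuousLinearMap.id ℝ ℝ)).prod
        ((mfderiv I₁ I₂ h x).comp ((1 : ℝ →L[ℝ] ℝ).smulRight (X₁ x)))) =
      ((1 : ℝ →L[ℝ] ℝ).smulRight
        ((mfderiv I₁ I₂ h x (X₁ x) : E₂) - X₂ (h x))) := by
    rw [hpt]
    refine ContinuousLinearMap.ext_ring ?_
    have hadd := mfderiv_prod_eq_add_apply (I := 𝓘(ℝ, ℝ)) (I' := I₂) (I'' := I₂)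
      (f := G) (p := ((0:ℝ), h x))
      (v := ((-(1:ℝ) : ℝ), (mfderiv I₁ I₂ h x (X₁ x) : E₂))) (hGmd _)
    -- first partial derivative: the flow of X₂
    have h1 : mfderiv 𝓘(ℝ, ℝ) I₂ (fun z : ℝ => G (z, (((0:ℝ), h x) : ℝ × M₂).2))
        (((0:ℝ), h x) : ℝ × M₂).1 = (1 : ℝ →L[ℝ] ℝ).smulRight (X₂ (h x)) := by
      have h1' := (hφ₂ (h x) 0).mfderiv
      have e : (X₂ ((fun t => φ₂ t (h x)) 0) : E₂) = X₂ (h x) :=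
        congrArg (fun y : M₂ => (X₂ y : E₂)) (hφ₂0 (h x))
      rw [e] at h1'
      exact h1'
    -- second partial derivative: identity
    have h2 : mfderiv I₂ I₂ (fun z : M₂ => G ((((0:ℝ), h x) : ℝ × M₂).1, z))
        (((0:ℝ), h x) : ℝ × M₂).2 = ContinuousLinearMap.id ℝ E₂ := by
      have e : (fun z : M₂ => G ((((0:ℝ), h x) : ℝ × M₂).1, z)) = id := funext hφ₂0
      rw [e]
      exact mfderiv_id
    show (mfderiv (𝓘(ℝ, ℝ).prod I₂) I₂ G ((0:ℝ), h x))
        ((-(1:ℝ) : ℝ), ((mfderiv I₁ I₂ h x) ((1:ℝ) • X₁ x) : E₂)) = _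
    rw [one_smul, hadd, h1, h2]
    simp [sub_eq_neg_add]
    show (-1:ℝ) • (X₂ (h x) : E₂) + (mfderiv I₁ I₂ h x (X₁ x) : E₂) =
      (1:ℝ) • (-(X₂ (h x) : E₂) + (mfderiv I₁ I₂ h x (X₁ x) : E₂))
    rw [neg_one_smul, one_smul]
  exact hF.congr_mfderiv key
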